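/- Assume U is an exponentially stable evolution family on X satisfying the Y-smoothing estimate with constants α ∈ (0,1), c, δ > 0, and assume the bi-almost automorphy hypothesis: for every sequence of real numbers (s'_n) there is a subsequence (s_n) such that for every x ∈ X and all t > s, U(t+s_n, s+s_n)x → U(t,s)x in the norm of Y as n → ∞. If h ∈ AA(X) (almost automorphic functions are automatically bounded), then the function (Rh)(t) := ∫_{−∞}^{t} U(t,s)h(s) ds (Bochner integral convergent in Y) belongs to AA(Y). -/

import Mathlib

open MeasureTheory Filter Topology Bornology

noncomputable section

/-- A continuous function `f : ℝ → Z` is almost automorphic if for every sequence of reals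
there is a subsequence `s ∘ k` and a function `g` with `f (t + s (k n)) → g t` and
`g (t - s (k n)) → f t` pointwise in norm. -/
def AlmostAutomorphicFn {Z : Type*} [NormedAddCommGroup Z] (f : ℝ → Z) : Prop :=
  Continuous f ∧ ∀ s' : ℕ → ℝ, ∃ k : ℕ → ℕ, StrictMono k ∧ ∃ g : ℝ → Z,
    (∀ t : ℝ, Tendsto (fun n => f (t + s' (k n))) atTop (𝓝 (g t))) ∧
    (∀ t : ℝ, Tendsto (fun n => g (t - s' (k n))) atTop (𝓝 (f t)))

/-- An almost automorphic function is bounded. -/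
lemma AlmostAutomorphicFn.bounded {Z : Type*} [NormedAddCommGroup Z] {f : ℝ → Z}
    (hf : AlmostAutomorphicFn f) : ∃ M : ℝ, 0 ≤ M ∧ ∀ t : ℝ, ‖f t‖ ≤ M := by
  by_contra hcon
  push_neg at hcon
  have hcon' : ∀ n : ℕ, ∃ t : ℝ, (n : ℝ) < ‖f t‖ := fun n => hcon n (Nat.cast_nonneg n)
  choose u hu using hcon'
  obtain ⟨k, hk, g, hg1, -⟩ := hf.2 u
  have hlim : Tendsto (fun n => ‖f (0 + u (k n))‖) atTop (𝓝 ‖g 0‖) := (hg1 0).norm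
  have hev : ∀ᶠ n in atTop, ‖f (0 + u (k n))‖ < ‖g 0‖ + 1 :=
    hlim.eventually_lt_const (lt_add_one _)
  obtain ⟨n, hn1, hn2⟩ := (hev.and (eventually_ge_atTop ⌈‖g 0‖ + 1⌉₊)).exists
  have h1 : (↑(k n) : ℝ) < ‖g 0‖ + 1 := by
    have := hu (k n)
    rw [zero_add] at hn1
    linarith
  have h2 : (‖g 0‖ + 1 : ℝ) ≤ (n : ℝ) := by
    calc (‖g 0‖ + 1 : ℝ) ≤ (⌈‖g 0‖ + 1⌉₊ : ℝ) := Nat.le_ceil _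
      _ ≤ (n : ℝ) := by exact_mod_cast hn2
  have h3 : (n : ℝ) ≤ (k n : ℝ) := by exact_mod_cast hk.le_apply
  linarith

section Aux

variable {X Y : Type*} [NormedAddCommGroup X] [NormedSpace ℝ X] [CompleteSpace X]
  [NormedAddCommGroup Y] [NormedSpace ℝ Y] [CompleteSpace Y]

/-- Integrability of the weight function `s ↦ exp (-b * (t - s)) * (t - s) ^ (-α)` on `Iio t`. -/
lemma weight_integrableOn {b α : ℝ} (hb : 0 < b) (hα0 : 0 < α) (hα1 : α < 1) (t : ℝ) :
    IntegrableOn (fun s => Real.exp (-b * (t - s)) * (t - s) ^ (-α)) (Set.Iio t) := by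
  have hcont : ContinuousOn (fun u : ℝ => Real.exp (-b * u) * u ^ (-α)) (Set.Ioi 0) := by
    apply ContinuousOn.mul
    · exact (Real.continuous_exp.comp (continuous_const.mul continuous_id)).continuousOn
    · exact ContinuousOn.rpow_const continuousOn_id (fun x hx => Or.inl (ne_of_gt hx))
  have h0 : IntegrableOn (fun u : ℝ => Real.exp (-b * u) * u ^ (-α)) (Set.Ioi (0:ℝ)) := by
    have hu : Set.Ioc (0:ℝ) 1 ∪ Set.Ioi 1 = Set.Ioi 0 := Set.Ioc_union_Ioi_eq_Ioi zero_le_one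
    rw [← hu]
    apply IntegrableOn.union
    · have hbase : IntegrableOn (fun u : ℝ => u ^ (-α)) (Set.Ioc (0:ℝ) 1) := by
        have := intervalIntegral.intervalIntegrable_rpow' (a := 0) (b := 1) (r := -α)
          (by linarith)
        rwa [intervalIntegrable_iff_integrableOn_Ioc_of_le zero_le_one] at this
      refine hbase.mono' ?_ ?_
      · exact (hcont.mono (fun x hx => hx.1)).aestronglyMeasurable measurableSet_Ioc
      · filter_upwards [ae_restrict_mem measurableSet_Ioc] with u hu'
        have h1 : (0:ℝ) < u := hu'.1
        have h2 : Real.exp (-b * u) ≤ 1 := by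
          rw [Real.exp_le_one_iff]
          nlinarith
        have h3 : (0:ℝ) ≤ u ^ (-α) := Real.rpow_nonneg h1.le _
        rw [Real.norm_eq_abs, abs_of_nonneg (by positivity)]
        nlinarith
    · refine (exp_neg_integrableOn_Ioi 1 hb).mono' ?_ ?_
      · exact (hcont.mono (fun x (hx : x ∈ Set.Ioi (1:ℝ)) => Set.mem_Ioi.2 (lt_trans zero_lt_one (Set.mem_Ioi.1 hx)))).aestronglyMeasurable
          measurableSet_Ioi
      · filter_upwards [ae_restrict_mem measurableSet_Ioi] with u hu'
        have h1 : (1:ℝ) ≤ u := le_of_lt hu'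
        have h2 : u ^ (-α) ≤ 1 := Real.rpow_le_one_of_one_le_of_nonpos h1 (by linarith)
        have h3 : (0:ℝ) ≤ u ^ (-α) := Real.rpow_nonneg (by linarith) _
        have h4 : (0:ℝ) < Real.exp (-b * u) := Real.exp_pos _
        rw [Real.norm_eq_abs, abs_of_nonneg (by positivity)]
        nlinarith
  have hmp : MeasurePreserving (fun s : ℝ => t - s) volume volume := by
    simpa [Function.comp_def, sub_eq_add_neg] using
      (measurePreserving_add_left (volume : Measure ℝ) t).comp
        (Measure.measurePreserving_neg (volume : Measure ℝ))
  have hemb : MeasurableEmbedding (fun s : ℝ => t - s) :=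
    (MeasurableEquiv.subLeft t).measurableEmbedding
  have hpre : (fun s : ℝ => t - s) ⁻¹' Set.Ioi 0 = Set.Iio t := by
    ext s; simp [Set.mem_preimage, sub_pos]
  have := (hmp.integrableOn_comp_preimage hemb
    (f := fun u : ℝ => Real.exp (-b * u) * u ^ (-α)) (s := Set.Ioi 0)).2 h0
  rw [hpre] at this
  exact this

variable (V : ℝ → ℝ → X →L[ℝ] Y) (c δ α : ℝ)

/-- The basic pointwise bound. -/
lemma norm_V_le_weight
    (hV : ∀ t s : ℝ, s < t → ∀ x : X,
      ‖V t s x‖ ≤ c * Real.exp (-(δ / 2) * (t - s)) * (t - s) ^ (-α) * ‖x‖)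
    (hc : 0 < c) {t s M : ℝ} (hst : s < t) {x : X} (hx : ‖x‖ ≤ M) :
    ‖V t s x‖ ≤ c * Real.exp (-(δ / 2) * (t - s)) * (t - s) ^ (-α) * M := by
  refine (hV t s hst x).trans ?_
  have h1 : (0:ℝ) ≤ c * Real.exp (-(δ / 2) * (t - s)) * (t - s) ^ (-α) := by
    have : (0:ℝ) ≤ (t - s) ^ (-α) := Real.rpow_nonneg (by linarith) _
    positivity
  exact mul_le_mul_of_nonneg_left hx h1

/-- Integrability of the weight, adapted shape. -/
lemma weight_integrableOn' (hc : 0 < c) (hδ : 0 < δ) (hα0 : 0 < α) (hα1 : α < 1)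
    (t M : ℝ) :
    Integrable (fun s => c * Real.exp (-(δ / 2) * (t - s)) * (t - s) ^ (-α) * M)
      (volume.restrict (Set.Iio t)) := by
  have hb : (0:ℝ) < δ / 2 := by linarith
  have h0 := (weight_integrableOn (α := α) hb hα0 hα1 t).const_mul (c * M)
  refine h0.congr ?_
  refine ae_of_all _ (fun s => ?_)
  ring

variable (U : ℝ → ℝ → X →L[ℝ] X) (J : Y →L[ℝ] X) (N : ℝ)

/-- For a continuous `f`, the map `s ↦ V t s (f s)` is continuous on `Iio t`. -/
lemma contOn_conv
    (hN : 1 ≤ N) (hδ : 0 < δ)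
    (hUcomp : ∀ t s r : ℝ, r ≤ s → s ≤ t → (U t s).comp (U s r) = U t r)
    (hUcont : ∀ x : X, ContinuousOn (fun p : ℝ × ℝ => U p.1 p.2 x) {p : ℝ × ℝ | p.2 ≤ p.1})
    (hstab : ∀ t s : ℝ, s ≤ t → ‖U t s‖ ≤ N * Real.exp (-δ * (t - s)))
    (hJinj : Function.Injective J)
    (hJV : ∀ t s : ℝ, s < t → ∀ x : X, J (V t s x) = U t s x)
    (f : ℝ → X) (hf : Continuous f) (t : ℝ) :
    ContinuousOn (fun s => V t s (f s)) (Set.Iio t) := by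
  intro s0 hs0
  have hs0t : s0 < t := hs0
  set m := (s0 + t) / 2 with hm
  have hs0m : s0 < m := by rw [hm]; linarith
  have hmt : m < t := by rw [hm]; linarith
  -- continuity of `s ↦ U m s (f s)` at `s0`
  have hθ : Tendsto (fun s => U m s (f s)) (𝓝 s0) (𝓝 (U m s0 (f s0))) := by
    have h1 : Tendsto (fun s => U m s (f s - f s0)) (𝓝 s0) (𝓝 0) := by
      apply squeeze_zero_norm' (a := fun s => N * ‖f s - f s0‖)
      · filter_upwards [eventually_lt_nhds hs0m] with s hs
        calc ‖U m s (f s - f s0)‖ ≤ ‖U m s‖ * ‖f s - f s0‖ :=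
              (U m s).le_opNorm _
          _ ≤ N * ‖f s - f s0‖ := by
              refine mul_le_mul_of_nonneg_right ?_ (norm_nonneg _)
              refine (hstab m s hs.le).trans ?_
              have : Real.exp (-δ * (m - s)) ≤ 1 := by
                rw [Real.exp_le_one_iff]
                nlinarith
              nlinarith
      · have : Tendsto (fun s => N * ‖f s - f s0‖) (𝓝 s0) (𝓝 (N * ‖f s0 - f s0‖)) :=
          (tendsto_const_nhds.mul ((hf.tendsto s0).sub tendsto_const_nhds).norm)
        simpa using this
    have h2 : Tendsto (fun s => U m s (f s0)) (𝓝 s0) (𝓝 (U m s0 (f s0))) := by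
      have hmem : {p : ℝ × ℝ | p.2 ≤ p.1} ∈ 𝓝 ((m, s0) : ℝ × ℝ) := by
        refine Filter.mem_of_superset ?_ (fun p (hp : p.2 < p.1) => le_of_lt hp)
        exact IsOpen.mem_nhds (isOpen_lt continuous_snd continuous_fst) hs0m
      have hco : ContinuousAt (fun p : ℝ × ℝ => U p.1 p.2 (f s0)) (m, s0) :=
        (hUcont (f s0)).continuousAt hmem
      have hpath : Continuous (fun s : ℝ => ((m : ℝ), s)) :=
        continuous_const.prodMk continuous_id
      exact hco.tendsto.comp (hpath.tendsto s0)
    have h3 := h1.add h2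
    rw [zero_add] at h3
    refine h3.congr (fun s => ?_)
    simp [map_sub]
  have hψ : ContinuousAt (fun s => V t m (U m s (f s))) s0 :=
    ((V t m).continuous.tendsto _).comp hθ
  have heq : ∀ s ∈ Set.Iio m, V t s (f s) = V t m (U m s (f s)) := by
    intro s hs
    apply hJinj
    rw [hJV t s (lt_trans hs hmt), hJV t m hmt]
    have hcomp := hUcomp t m s (le_of_lt hs) (le_of_lt hmt)
    calc U t s (f s) = ((U t m).comp (U m s)) (f s) := by rw [hcomp]
      _ = U t m (U m s (f s)) := rfl
  refine ContinuousWithinAt.congr_of_eventuallyEq hψ.continuousWithinAt ?_ (heq s0 hs0m)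
  have hmem : Set.Iio m ∈ 𝓝[Set.Iio t] s0 := nhdsWithin_le_nhds (Iio_mem_nhds hs0m)
  filter_upwards [hmem] with s hs
  exact heq s hs

/-- Core dominated-convergence lemma. -/
lemma core_tendsto
    (hc : 0 < c) (hδ : 0 < δ) (hα0 : 0 < α) (hα1 : α < 1)
    (hV : ∀ t s : ℝ, s < t → ∀ x : X,
      ‖V t s x‖ ≤ c * Real.exp (-(δ / 2) * (t - s)) * (t - s) ^ (-α) * ‖x‖)
    (t : ℝ) (σ : ℕ → ℝ) (fX : ℕ → ℝ → X) (φ : ℝ → X) (M : ℝ)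
    (hM : ∀ n s, ‖fX n s‖ ≤ M)
    (hconv : ∀ s : ℝ, s < t → Tendsto (fun n => fX n s) atTop (𝓝 (φ s)))
    (hVconv : ∀ (x : X) (s : ℝ), s < t →
      Tendsto (fun n => V (t + σ n) (s + σ n) x) atTop (𝓝 (V t s x)))
    (hmeas : ∀ n, AEStronglyMeasurable (fun s => V (t + σ n) (s + σ n) (fX n s))
      (volume.restrict (Set.Iio t))) :
    Tendsto (fun n => ∫ s in Set.Iio t, V (t + σ n) (s + σ n) (fX n s)) atTop
      (𝓝 (∫ s in Set.Iio t, V t s (φ s))) := by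
  apply tendsto_integral_of_dominated_convergence
    (bound := fun s => c * Real.exp (-(δ / 2) * (t - s)) * (t - s) ^ (-α) * M)
    hmeas (weight_integrableOn' c δ α hc hδ hα0 hα1 t M)
  · intro n
    filter_upwards [ae_restrict_mem measurableSet_Iio] with s hs
    have hst : s + σ n < t + σ n := by linarith [Set.mem_Iio.1 hs]
    have := norm_V_le_weight V c δ α hV hc hst (hM n s)
    simpa [add_sub_add_right_eq_sub] using this
  · filter_upwards [ae_restrict_mem measurableSet_Iio] with s hs
    have hst : s < t := hs
    have h1 : Tendsto (fun n => V (t + σ n) (s + σ n) (fX n s - φ s)) atTop (𝓝 0) := by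
      apply squeeze_zero_norm
        (a := fun n => c * Real.exp (-(δ / 2) * (t - s)) * (t - s) ^ (-α) * ‖fX n s - φ s‖)
      · intro n
        have hst' : s + σ n < t + σ n := by linarith
        have := norm_V_le_weight V c δ α hV hc hst' (le_refl ‖fX n s - φ s‖)
        simpa [add_sub_add_right_eq_sub] using this
      · have hn0 : Tendsto (fun n => ‖fX n s - φ s‖) atTop (𝓝 0) :=
          tendsto_iff_norm_sub_tendsto_zero.mp (hconv s hst)
        have := hn0.const_mul (c * Real.exp (-(δ / 2) * (t - s)) * (t - s) ^ (-α))
        simpa [mul_assoc] using this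
    have h2 := hVconv (φ s) s hst
    have h3 := h1.add h2
    rw [zero_add] at h3
    refine h3.congr (fun n => ?_)
    simp [map_sub]

/-- Translation of the integral. -/
lemma shift_integral (F : ℝ → Y) (t σ : ℝ) :
    (∫ s in Set.Iio (t + σ), F s) = ∫ s in Set.Iio t, F (s + σ) := by
  have hmp : MeasurePreserving (fun s : ℝ => s + σ) volume volume :=
    measurePreserving_add_right volume σ
  have hemb : MeasurableEmbedding (fun s : ℝ => s + σ) := by
    have := (MeasurableEquiv.addRight σ).measurableEmbedding
    simpa [MeasurableEquiv.coe_addRight] using this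
  have hpre : (fun s : ℝ => s + σ) ⁻¹' Set.Iio (t + σ) = Set.Iio t := by
    ext s; simp
  have := hmp.setIntegral_preimage_emb hemb F (Set.Iio (t + σ))
  rw [hpre] at this
  exact this.symm

end Aux

theorem convolution_preserves_almost_automorphy
    {X Y : Type*} [NormedAddCommGroup X] [NormedSpace ℝ X] [CompleteSpace X]
    [NormedAddCommGroup Y] [NormedSpace ℝ Y] [CompleteSpace Y]
    (U : ℝ → ℝ → X →L[ℝ] X) (V : ℝ → ℝ → X →L[ℝ] Y) (J : Y →L[ℝ] X)
    (N c δ α : ℝ) (hN : 1 ≤ N) (hc : 0 < c) (hδ : 0 < δ) (hα0 : 0 < α) (hα1 : α < 1)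
    -- `U` is an evolution family on `X`
    (hUid : ∀ t : ℝ, U t t = ContinuousLinearMap.id ℝ X)
    (hUcomp : ∀ t s r : ℝ, r ≤ s → s ≤ t → (U t s).comp (U s r) = U t r)
    (hUcont : ∀ x : X, ContinuousOn (fun p : ℝ × ℝ => U p.1 p.2 x) {p : ℝ × ℝ | p.2 ≤ p.1})
    -- exponential stability of `U` and the `Y`-smoothing estimate: `J : Y ↪ X` is a continuous
    -- embedding and `V t s` is `U t s` viewed as an operator from `X` to `Y` (for `s < t`)
    (hstab : ∀ t s : ℝ, s ≤ t → ‖U t s‖ ≤ N * Real.exp (-δ * (t - s)))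
    (hJinj : Function.Injective J)
    (hJV : ∀ t s : ℝ, s < t → ∀ x : X, J (V t s x) = U t s x)
    (hV : ∀ t s : ℝ, s < t → ∀ x : X,
      ‖V t s x‖ ≤ c * Real.exp (-(δ / 2) * (t - s)) * (t - s) ^ (-α) * ‖x‖)
    -- bi-almost automorphy of `(t,s) ↦ U (t, s)` in the norm of `Y`
    (hbiAA : ∀ s' : ℕ → ℝ, ∃ k : ℕ → ℕ, StrictMono k ∧ ∀ (x : X) (t s : ℝ), s < t →
      Tendsto (fun n => V (t + s' (k n)) (s + s' (k n)) x) atTop (𝓝 (V t s x)))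
    -- `h` is almost automorphic (hence bounded)
    (h : ℝ → X) (hh : AlmostAutomorphicFn h) :
    (∀ t : ℝ, IntegrableOn (fun s => V t s (h s)) (Set.Iio t)) ∧
    AlmostAutomorphicFn (fun t : ℝ => ∫ s in Set.Iio t, V t s (h s)) := by
  obtain ⟨M, hM0, hM⟩ := hh.bounded
  have hhc : Continuous h := hh.1
  -- measurability of shifted integrands
  have hmeas_shift : ∀ (t τ : ℝ) (f : ℝ → X), Continuous f →
      AEStronglyMeasurable (fun s => V (t + τ) (s + τ) (f (s + τ)))
        (volume.restrict (Set.Iio t)) := by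
    intro t τ f hf
    have h1 : ContinuousOn (fun s => V (t + τ) s (f s)) (Set.Iio (t + τ)) :=
      contOn_conv V δ U J N hN hδ hUcomp hUcont hstab hJinj hJV f hf (t + τ)
    have h2 : ContinuousOn (fun s : ℝ => V (t + τ) (s + τ) (f (s + τ))) (Set.Iio t) := by
      refine ContinuousOn.comp h1
        (Continuous.continuousOn (continuous_id.add continuous_const)) ?_
      intro s hs
      simp only [Set.mem_Iio] at *
      linarith
    exact h2.aestronglyMeasurable measurableSet_Iio
  -- integrability
  have hint : ∀ t : ℝ, IntegrableOn (fun s => V t s (h s)) (Set.Iio t) := by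
    intro t
    have hsm : AEStronglyMeasurable (fun s => V t s (h s)) (volume.restrict (Set.Iio t)) :=
      (contOn_conv V δ U J N hN hδ hUcomp hUcont hstab hJinj hJV h hhc t).aestronglyMeasurable
        measurableSet_Iio
    refine (weight_integrableOn' c δ α hc hδ hα0 hα1 t M).mono' hsm ?_
    filter_upwards [ae_restrict_mem measurableSet_Iio] with s hs
    exact norm_V_le_weight V c δ α hV hc hs (hM s)
  refine ⟨hint, ?_, ?_⟩
  -- continuity of the convolution
  · rw [continuous_iff_seqContinuous]
    intro u t0 hu
    apply tendsto_of_subseq_tendsto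
    intro ns hns
    obtain ⟨k, hk, hVk⟩ := hbiAA (fun n => u (ns n) - t0)
    refine ⟨k, ?_⟩
    have hσ0 : Tendsto (fun n => u (ns (k n)) - t0) atTop (𝓝 0) := by
      have h1 : Tendsto (fun n => u (ns (k n))) atTop (𝓝 t0) :=
        (hu.comp hns).comp hk.tendsto_atTop
      simpa using h1.sub_const t0
    have key := core_tendsto V c δ α hc hδ hα0 hα1 hV t0
      (fun n => u (ns (k n)) - t0)
      (fun n s => h (s + (u (ns (k n)) - t0))) h M
      (fun n s => hM _)
      (fun s _ => by
        have : Tendsto (fun n => s + (u (ns (k n)) - t0)) atTop (𝓝 s) := by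
          simpa using (tendsto_const_nhds (x := s)).add hσ0
        exact (hhc.tendsto s).comp this)
      (fun x s hs => hVk x t0 s hs)
      (fun n => hmeas_shift t0 _ h hhc)
    refine key.congr (fun n => ?_)
    have ht' : t0 + (u (ns (k n)) - t0) = u (ns (k n)) := by ring
    exact (shift_integral (fun s => V (t0 + (u (ns (k n)) - t0)) s (h s)) t0
        (u (ns (k n)) - t0)).symm.trans
      (congrArg (fun r => ∫ s in Set.Iio r, V r s (h s)) ht')
  -- almost automorphy
  · intro s'
    obtain ⟨k₁, hk₁, g, hg1, hg2⟩ := hh.2 s'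
    obtain ⟨k₂, hk₂, hV2⟩ := hbiAA (fun n => s' (k₁ n))
    obtain ⟨k₃, hk₃, hV3⟩ := hbiAA (fun n => -(s' (k₁ (k₂ n))))
    set k : ℕ → ℕ := fun n => k₁ (k₂ (k₃ n)) with hkdef
    have hk : StrictMono k := hk₁.comp (hk₂.comp hk₃)
    set σ : ℕ → ℝ := fun n => s' (k n) with hσdef
    have hgM : ∀ s : ℝ, ‖g s‖ ≤ M := by
      intro s
      exact le_of_tendsto (hg1 s).norm (Filter.Eventually.of_forall (fun n => hM _))
    refine ⟨k, hk, fun t => ∫ s in Set.Iio t, V t s (g s), ?_, ?_⟩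
    · -- forward limit
      intro t
      have key := core_tendsto V c δ α hc hδ hα0 hα1 hV t σ
        (fun n s => h (s + σ n)) g M
        (fun n s => hM _)
        (fun s _ => (hg1 s).comp ((hk₂.comp hk₃).tendsto_atTop))
        (fun x s hs => (hV2 x t s hs).comp hk₃.tendsto_atTop)
        (fun n => hmeas_shift t (σ n) h hhc)
      refine key.congr (fun n => ?_)
      exact (shift_integral (fun s => V (t + σ n) s (h s)) t (σ n)).symm
    · -- backward limit
      intro t
      -- measurability of the `g`-integrand
      have hgmeas : ∀ n, AEStronglyMeasurable
          (fun s => V (t + -(σ n)) (s + -(σ n)) (g (s + -(σ n))))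
          (volume.restrict (Set.Iio t)) := by
        intro n
        apply aestronglyMeasurable_of_tendsto_ae (u := atTop)
          (f := fun m => fun s => V (t + -(σ n)) (s + -(σ n)) (h ((s + -(σ n)) + s' (k₁ m))))
        · intro m
          have h1 : ContinuousOn (fun s => V (t + -(σ n)) s (h (s + s' (k₁ m))))
              (Set.Iio (t + -(σ n))) :=
            contOn_conv V δ U J N hN hδ hUcomp hUcont hstab hJinj hJV
              (fun s => h (s + s' (k₁ m))) (hhc.comp (continuous_id.add continuous_const))
              (t + -(σ n))
          have h2 : ContinuousOn
              (fun s : ℝ => V (t + -(σ n)) (s + -(σ n)) (h ((s + -(σ n)) + s' (k₁ m))))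
              (Set.Iio t) := by
            refine ContinuousOn.comp h1
              (Continuous.continuousOn (continuous_id.add continuous_const)) ?_
            intro s hs
            simp only [Set.mem_Iio] at *
            linarith
          exact h2.aestronglyMeasurable measurableSet_Iio
        · refine ae_of_all _ (fun s => ?_)
          exact ((V (t + -(σ n)) (s + -(σ n))).continuous.tendsto _).comp (hg1 (s + -(σ n)))
      have key := core_tendsto V c δ α hc hδ hα0 hα1 hV t (fun n => -(σ n))
        (fun n s => g (s + -(σ n))) h M
        (fun n s => hgM _)
        (fun s _ => by
          have := (hg2 s).comp ((hk₂.comp hk₃).tendsto_atTop)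
          refine this.congr (fun n => ?_)
          simp [sub_eq_add_neg, hσdef, hkdef, Function.comp])
        (fun x s hs => hV3 x t s hs)
        hgmeas
      refine key.congr (fun n => ?_)
      have ht' : t + -(σ n) = t - σ n := by ring
      exact (shift_integral (fun s => V (t + -(σ n)) s (g s)) t (-(σ n))).symm.trans
        (congrArg (fun r => ∫ s in Set.Iio r, V r s (g s)) ht')
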